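/- Let C be a locally λ-presentable category with the transferability property. Then every λ-injective object of C is absolutely λ-pure: every monomorphism with λ-injective domain is a λ-pure monomorphism. -/

import Mathlib

universe v u

open CategoryTheory Limits Opposite

/-- A small category `J` is `κ`-filtered if every diagram in `J` of size `< κ`
admits a cocone. -/
def IsKappaFiltered (J : Type v) [SmallCategory J] (κ : Cardinal.{v}) : Prop :=
  ∀ (K : Type v) (_ : SmallCategory K), Cardinal.mk (Σ (a : K) (b : K), a ⟶ b) < κ →
    ∀ F : K ⥤ J, Nonempty (Cocone F)

/-- An object `X` is `κ`-presentable if its hom-functor preserves `κ`-filtered colimits. -/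
def KPresentable {C : Type u} [Category.{v} C] (κ : Cardinal.{v}) (X : C) : Prop :=
  ∀ (J : Type v) (_ : SmallCategory J), IsKappaFiltered J κ →
    Nonempty (PreservesColimitsOfShape J (coyoneda.obj (op X)))

/-- An object `X` is `κ`-generated if its hom-functor preserves `κ`-filtered colimits
of diagrams of monomorphisms. -/
def KGenerated {C : Type u} [Category.{v} C] (κ : Cardinal.{v}) (X : C) : Prop :=
  ∀ (J : Type v) (_ : SmallCategory J), IsKappaFiltered J κ →
    ∀ F : J ⥤ C, (∀ {i j : J} (f : i ⟶ j), Mono (F.map f)) →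
      Nonempty (PreservesColimit F (coyoneda.obj (op X)))

/-- `C` is locally `κ`-presentable. -/
def LocallyPresentable (C : Type u) [Category.{v} C] (κ : Cardinal.{v}) : Prop :=
  Cardinal.IsRegular κ ∧ HasColimits C ∧ ∃ S : Set C,
    Small.{v} S ∧ (∀ X ∈ S, KPresentable κ X) ∧
    ∀ A : C, ∃ (J : Type v) (_ : SmallCategory J) (_ : IsKappaFiltered J κ) (F : J ⥤ C)
      (c : Cocone F), Nonempty (IsColimit c) ∧ c.pt = A ∧ ∀ j, F.obj j ∈ S

/-- `K` is injective with respect to the morphism `n`. -/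
def InjWrt {C : Type u} [Category.{v} C] {X Y : C} (n : X ⟶ Y) (K : C) : Prop :=
  ∀ u : X ⟶ K, ∃ w : Y ⟶ K, n ≫ w = u

/-- `f : A ⟶ B` is a `κ`-pure morphism. -/
def KPure {C : Type u} [Category.{v} C] (κ : Cardinal.{v}) {A B : C} (f : A ⟶ B) : Prop :=
  ∀ ⦃P Q : C⦄ (z : P ⟶ Q) (u : P ⟶ A) (v : Q ⟶ B), KPresentable κ P → KPresentable κ Q →
    u ≫ f = z ≫ v → ∃ d : Q ⟶ A, z ≫ d = u

lemma isFiltered_of_isKappaFiltered {J : Type v} [SmallCategory J] {κ : Cardinal.{v}}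
    (hreg : Cardinal.IsRegular κ) (hJ : IsKappaFiltered J κ) : IsFiltered J := by
  apply IsFiltered.of_cocone_nonempty.{v}
  intro K _ _ F
  exact hJ K inferInstance (lt_of_lt_of_le (Cardinal.lt_aleph0_of_finite _) hreg.aleph0_le) F

noncomputable def forgetMapCoconeIsColimit {C : Type u} [Category.{v} C]
    {J : Type v} [SmallCategory J] [IsFiltered J]
    {M : C} (F : J ⥤ Under M) {c : Cocone F} (hc : IsColimit c) :
    IsColimit ((Under.forget M).mapCocone c) := by
  have j₀ : J := IsFiltered.nonempty.some
  have key : ∀ (s : Cocone (F ⋙ Under.forget M)) (j : J),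
      (F.obj j).hom ≫ s.ι.app j = (F.obj j₀).hom ≫ s.ι.app j₀ := by
    intro s j
    have h1 : ∀ (a : J) (g : a ⟶ IsFiltered.max j j₀),
        (F.obj a).hom ≫ s.ι.app a = (F.obj (IsFiltered.max j j₀)).hom ≫ s.ι.app _ := by
      intro a g
      rw [← s.w g]
      have := Under.w (F.map g)
      exact (Category.assoc _ _ _).symm.trans (congrArg (· ≫ s.ι.app _) this)
    rw [h1 j (IsFiltered.leftToMax j j₀), h1 j₀ (IsFiltered.rightToMax j j₀)]
  let scone : ∀ s : Cocone (F ⋙ Under.forget M), Cocone F := fun s =>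
    { pt := Under.mk ((F.obj j₀).hom ≫ s.ι.app j₀)
      ι :=
        { app := fun j => Under.homMk (s.ι.app j) (key s j)
          naturality := fun i j g => by
            ext
            · exact (s.w g).trans (Category.comp_id _).symm } }
  refine
    { desc := fun s => (hc.desc (scone s)).right
      fac := fun s j => congrArg CommaMorphism.right (hc.fac (scone s) j)
      uniq := fun s m hm => ?_ }
  have hw : c.pt.hom ≫ m = (F.obj j₀).hom ≫ s.ι.app j₀ := by
    have h0 := Under.w (c.ι.app j₀)
    dsimp at h0
    rw [← h0]; erw [Category.assoc]
    have := hm j₀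
    dsimp at this
    rw [this]
  exact congrArg CommaMorphism.right
    (hc.uniq (scone s) (Under.homMk m hw) (fun j => by ext; · exact hm j))


/-- In a locally `κ`-presentable category with the transferability property, every
`κ`-injective object is absolutely `κ`-pure: every monomorphism out of it is `κ`-pure. -/
theorem kInjective_absolutelyPure {C : Type u} [Category.{v} C]
    {κ : Cardinal.{v}} (h : LocallyPresentable C κ)
    (transfer : ∀ {X Y Z W : C} (m : X ⟶ Y) (g : X ⟶ Z) (h' : Z ⟶ W) (i : Y ⟶ W),
      Mono m → IsPushout g m h' i → Mono h')
    (M : C)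
    (hinj : ∀ {A B : C} (n : A ⟶ B), Mono n → KPresentable κ (Under.mk n) → InjWrt n M)
    {B : C} (f : M ⟶ B) (hf : Mono f) : KPure κ f := by
  intro P Q z u v hP hQ hcomm
  haveI : HasColimits C := h.2.1
  let p : M ⟶ pushout u z := pushout.inl u z
  let r : Q ⟶ pushout u z := pushout.inr u z
  let t : pushout u z ⟶ B := pushout.desc f v hcomm
  have hpt : p ≫ t = f := pushout.inl_desc f v hcomm
  have hmono : Mono p := by
    have : Mono (p ≫ t) := by rw [hpt]; exact hf
    exact mono_of_mono p t
  have hpres : KPresentable κ (Under.mk p) := by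
    intro J _ hJ
    haveI : IsFiltered J := isFiltered_of_isKappaFiltered h.1 hJ
    obtain ⟨instQ⟩ := hQ J inferInstance hJ
    obtain ⟨instP⟩ := hP J inferInstance hJ
    refine ⟨⟨fun {F} => ⟨fun {c} hc => ⟨?_⟩⟩⟩⟩
    have hc' : IsColimit ((Under.forget M).mapCocone c) := forgetMapCoconeIsColimit F hc
    haveI := instQ
    haveI := instP
    have hcQ : IsColimit ((coyoneda.obj (op Q)).mapCocone ((Under.forget M).mapCocone c)) :=
      isColimitOfPreserves (coyoneda.obj (op Q)) hc'
    have hcP : IsColimit ((coyoneda.obj (op P)).mapCocone ((Under.forget M).mapCocone c)) :=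
      isColimitOfPreserves (coyoneda.obj (op P)) hc'
    apply Types.FilteredColimit.isColimitOf
    · -- surjectivity
      intro x
      obtain ⟨j, (bj : Q ⟶ (F.obj j).right), hbj⟩ := Types.jointly_surjective _ hcQ (r ≫ x.right)
      change bj ≫ (c.ι.app j).right = r ≫ x.right at hbj
      -- equal images of `z ≫ bj` and `u ≫ (F.obj j).hom` in the P-colimit
      have heqι : ((coyoneda.obj (op P)).mapCocone ((Under.forget M).mapCocone c)).ι.app j
            (z ≫ bj) =
          ((coyoneda.obj (op P)).mapCocone ((Under.forget M).mapCocone c)).ι.app j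
            (u ≫ (F.obj j).hom) := by
        show (z ≫ bj) ≫ (c.ι.app j).right = (u ≫ (F.obj j).hom) ≫ (c.ι.app j).right
        have hx := Under.w x
        dsimp at hx
        have hcw := Under.w (c.ι.app j)
        dsimp at hcw
        rw [Category.assoc, hbj, Category.assoc, hcw]
        calc z ≫ r ≫ x.right = (u ≫ p) ≫ x.right := by
              rw [← Category.assoc, ← pushout.condition]
          _ = u ≫ c.pt.hom := by rw [Category.assoc, hx]
      rw [Types.FilteredColimit.isColimit_eq_iff _ hcP] at heqι
      obtain ⟨k, g1, g2, hg⟩ := heqι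
      change (z ≫ bj) ≫ (F.map g1).right = (u ≫ (F.obj j).hom) ≫ (F.map g2).right at hg
      set g3 := IsFiltered.coeqHom g1 g2
      have hco := IsFiltered.coeq_condition g1 g2
      have key : u ≫ (F.obj (IsFiltered.coeq g1 g2)).hom =
          z ≫ (bj ≫ (F.map (g1 ≫ g3)).right) := by
        have h2 := Under.w (F.map g3)
        have h1 := Under.w (F.map g2)
        calc u ≫ (F.obj (IsFiltered.coeq g1 g2)).hom
            = u ≫ (F.obj j).hom ≫ (F.map g2).right ≫ (F.map g3).right := by
              rw [← Category.assoc ((F.obj j).hom), h1, h2]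
          _ = (u ≫ (F.obj j).hom ≫ (F.map g2).right) ≫ (F.map g3).right := by
              simp only [Category.assoc]
          _ = ((z ≫ bj) ≫ (F.map g1).right) ≫ (F.map g3).right := by
              rw [← Category.assoc u, ← hg]
          _ = z ≫ bj ≫ (F.map (g1 ≫ g3)).right := by
              rw [F.map_comp, Under.comp_right]; simp only [Category.assoc]
      refine ⟨IsFiltered.coeq g1 g2,
        Under.homMk (pushout.desc (F.obj (IsFiltered.coeq g1 g2)).hom
          (bj ≫ (F.map (g1 ≫ g3)).right) key) (pushout.inl_desc _ _ _), ?_⟩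
      change x = _ ≫ c.ι.app (IsFiltered.coeq g1 g2)
      refine Under.UnderMorphism.ext ?_
      · dsimp
        change x.right = pushout.desc (F.obj (IsFiltered.coeq g1 g2)).hom
          (bj ≫ (F.map (g1 ≫ g3)).right) key ≫ (c.ι.app (IsFiltered.coeq g1 g2)).right
        apply pushout.hom_ext
        · have hx := Under.w x
          dsimp at hx
          have hcw := Under.w (c.ι.app (IsFiltered.coeq g1 g2))
          dsimp at hcw
          rw [hx]
          rw [← Category.assoc, pushout.inl_desc, hcw]
        · have hcnat := c.w (g1 ≫ g3)
          rw [← Category.assoc, pushout.inr_desc, ← hbj]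
          have : (F.map (g1 ≫ g3)).right ≫ (c.ι.app (IsFiltered.coeq g1 g2)).right =
              (c.ι.app j).right := by
            rw [← Under.comp_right, hcnat]
          simp only [Category.assoc]
          rw [this]
    · -- injectivity
      intro i j xi xj hij
      change xi ≫ c.ι.app i = xj ≫ c.ι.app j at hij
      have heqι : ((coyoneda.obj (op Q)).mapCocone ((Under.forget M).mapCocone c)).ι.app i
            (r ≫ xi.right) =
          ((coyoneda.obj (op Q)).mapCocone ((Under.forget M).mapCocone c)).ι.app j
            (r ≫ xj.right) := by
        show (r ≫ xi.right) ≫ (c.ι.app i).right = (r ≫ xj.right) ≫ (c.ι.app j).right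
        simp only [Category.assoc]
        rw [← Under.comp_right, ← Under.comp_right, hij]
      rw [Types.FilteredColimit.isColimit_eq_iff _ hcQ] at heqι
      obtain ⟨k, g1, g2, hg⟩ := heqι
      change (r ≫ xi.right) ≫ (F.map g1).right = (r ≫ xj.right) ≫ (F.map g2).right at hg
      refine ⟨k, g1, g2, ?_⟩
      change xi ≫ F.map g1 = xj ≫ F.map g2
      ext
      · dsimp
        apply pushout.hom_ext
        · have hi := Under.w xi
          have hj := Under.w xj
          have h1 := Under.w (F.map g1)
          have h2 := Under.w (F.map g2)
          dsimp at hi hj h1 h2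
          rw [← Category.assoc, hi, ← Category.assoc, hj, h1, h2]
        · simpa only [Category.assoc] using hg
  obtain ⟨w, hw⟩ := hinj p hmono hpres (𝟙 M)
  refine ⟨r ≫ w, ?_⟩
  rw [← Category.assoc, ← pushout.condition, Category.assoc, hw, Category.comp_id]
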